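/- Let 0 < p < 1, let A_1,...,A_n be self-adjoint operators on a Hilbert space H with 0 ≤ m·I_H ≤ A_j ≤ M·I_H < I_H, let Φ_1,...,Φ_n be unital positive linear maps from B(H) to B(K), and let ω_1,...,ω_n be positive reals with ∑ ω_j = 1. Set δ = (1-p)·((1/p)·((1-m)^p - (1-M)^p)/(M-m))^{p/(p-1)} + ((1-M)(1-m)^p - (1-m)(1-M)^p)/(M-m). Then δ·I_K + ∑_{j=1}^n ω_j Φ_j((I_H - A_j)^p) ≥ (∑_{j=1}^n ω_j Φ_j(I_H - A_j))^p. -/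

import Mathlib

open Real

private lemma tangent_bound {p α t : ℝ} (hp0 : 0 < p) (hp1 : p < 1) (hα : 0 < α) (ht : 0 ≤ t) :
    t ^ p ≤ α * t + (1 - p) * (α / p) ^ (p / (p - 1)) := by
  have hαp : 0 < α / p := div_pos hα hp0
  set c : ℝ := (α / p) ^ ((1 : ℝ) / (p - 1)) with hc
  have hcpos : 0 < c := rpow_pos_of_pos hαp _
  have hp1' : p - 1 ≠ 0 := by linarith
  have hc1 : c ^ (p - 1) = α / p := by
    rw [hc, ← Real.rpow_mul hαp.le, one_div_mul_cancel hp1', rpow_one]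
  have hcp : c ^ p = (α / p) ^ (p / (p - 1)) := by
    rw [hc, ← Real.rpow_mul hαp.le, one_div_mul_eq_div]
  have hcpval : c ^ p = α / p * c := by
    have h1 : c ^ p = c ^ (p - 1) * c ^ (1 : ℝ) := by
      rw [← Real.rpow_add hcpos]; ring_nf
    rw [h1, hc1, rpow_one]
  have hs : (-1 : ℝ) ≤ t / c - 1 := by
    have : 0 ≤ t / c := div_nonneg ht hcpos.le
    linarith
  have hb := rpow_one_add_le_one_add_mul_self hs hp0.le hp1.le
  have h1 : 1 + (t / c - 1) = t / c := by ring
  rw [h1] at hb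
  have htc : (t / c) ^ p = t ^ p / c ^ p := Real.div_rpow ht hcpos.le p
  rw [htc] at hb
  have hcp' : 0 < c ^ p := rpow_pos_of_pos hcpos _
  rw [div_le_iff₀ hcp'] at hb
  rw [hcpval] at hb
  rw [← hcp, hcpval]
  refine hb.trans (le_of_eq ?_)
  field_simp
  ring

private lemma chord_bound {p a b t : ℝ} (hp0 : 0 < p) (hp1 : p < 1) (ha : 0 ≤ a)
    (hab : a < b) (hta : a ≤ t) (htb : t ≤ b) :
    (b ^ p - a ^ p) / (b - a) * t + (b * a ^ p - a * b ^ p) / (b - a) ≤ t ^ p := by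
  have hba : 0 < b - a := by linarith
  have hconc := Real.concaveOn_rpow hp0.le hp1.le
  have hl : 0 ≤ (b - t) / (b - a) := by
    apply div_nonneg (by linarith) hba.le
  have hr : 0 ≤ (t - a) / (b - a) := by
    apply div_nonneg (by linarith) hba.le
  have hsum : (b - t) / (b - a) + (t - a) / (b - a) = 1 := by
    field_simp
    ring
  have h := hconc.2 (Set.mem_Ici.mpr ha) (Set.mem_Ici.mpr (by linarith : (0:ℝ) ≤ b)) hl hr hsum
  simp only [smul_eq_mul] at h
  have ht' : (b - t) / (b - a) * a + (t - a) / (b - a) * b = t := by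
    field_simp; ring
  rw [ht'] at h
  refine le_trans (le_of_eq ?_) h
  field_simp
  ring

private lemma cfc_affine {𝒞 : Type*} [CStarAlgebra 𝒞] [PartialOrder 𝒞] [StarOrderedRing 𝒞]
    (y : 𝒞) (hy : IsSelfAdjoint y) (c d : ℝ) :
    cfc (fun t : ℝ => c * t + d) y = c • y + d • 1 := by
  rw [cfc_add y (fun t => c * t) (fun _ => d) (by fun_prop) (by fun_prop),
    cfc_const_mul c (fun t : ℝ => t) y (by fun_prop), cfc_id' ℝ y hy,
    cfc_const d y hy, Algebra.algebraMap_eq_smul_one]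

/-- A reverse operator Bellman inequality:
`(∑ ω_j Φ_j(1 - A_j))^p ≤ δ•1 + ∑ ω_j Φ_j((1 - A_j)^p)`. -/
theorem reverse_operator_bellman
    {𝒜 ℬ : Type*} [CStarAlgebra 𝒜] [PartialOrder 𝒜] [StarOrderedRing 𝒜]
    [CStarAlgebra ℬ] [PartialOrder ℬ] [StarOrderedRing ℬ]
    (n : ℕ) (p m M : ℝ) (hp0 : 0 < p) (hp1 : p < 1)
    (hm : 0 ≤ m) (hmM : m < M) (hM : M < 1)
    (A : Fin n → 𝒜) (hA : ∀ j, IsSelfAdjoint (A j))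
    (hAm : ∀ j, m • (1 : 𝒜) ≤ A j) (hAM : ∀ j, A j ≤ M • (1 : 𝒜))
    (Φ : Fin n → (𝒜 →ₗ[ℂ] ℬ)) (hΦ1 : ∀ j, Φ j 1 = 1)
    (hΦpos : ∀ j, ∀ a : 𝒜, 0 ≤ a → 0 ≤ Φ j a)
    (ω : Fin n → ℝ) (hω : ∀ j, 0 < ω j) (hωsum : ∑ j, ω j = 1) :
    cfc (fun t : ℝ => t ^ p) (∑ j, ω j • Φ j (1 - A j)) ≤
      ((1 - p) * ((1 / p) * ((1 - m) ^ p - (1 - M) ^ p) / (M - m)) ^ (p / (p - 1)) +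
          ((1 - M) * (1 - m) ^ p - (1 - m) * (1 - M) ^ p) / (M - m)) • (1 : ℬ) +
        ∑ j, ω j • Φ j (cfc (fun t : ℝ => t ^ p) (1 - A j)) := by
  -- scalar abbreviations
  set a : ℝ := 1 - M with ha_def
  set b : ℝ := 1 - m with hb_def
  have ha0 : 0 < a := by simp only [ha_def]; linarith
  have hab : a < b := by simp only [ha_def, hb_def]; linarith
  have hba : b - a = M - m := by simp only [ha_def, hb_def]; ring
  have hMm : (0:ℝ) < M - m := by linarith
  set α : ℝ := (b ^ p - a ^ p) / (b - a) with hα_def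
  set β : ℝ := (b * a ^ p - a * b ^ p) / (b - a) with hβ_def
  have hαpos : 0 < α := by
    apply div_pos _ (by linarith)
    have := Real.rpow_lt_rpow ha0.le hab hp0
    linarith
  set γ : ℝ := (1 - p) * (α / p) ^ (p / (p - 1)) with hγ_def
  -- the constant in the statement equals γ - β
  have hD : (1 - p) * ((1 / p) * (b ^ p - a ^ p) / (M - m)) ^ (p / (p - 1)) +
      (a * b ^ p - b * a ^ p) / (M - m) = γ - β := by
    have h1 : (1 / p) * (b ^ p - a ^ p) / (M - m) = α / p := by
      rw [hα_def, ← hba, one_div_mul_eq_div, div_right_comm]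
    have h2 : (a * b ^ p - b * a ^ p) / (M - m) = -β := by
      rw [hβ_def, hba]; ring
    rw [h1, h2, hγ_def]; ring
  -- continuity of t ^ p
  have hfc : Continuous (fun t : ℝ => t ^ p) := by
    rw [continuous_iff_continuousAt]
    exact fun x => Real.continuousAt_rpow_const x p (Or.inr hp0.le)
  -- basic operator facts
  have hBsa : ∀ j, IsSelfAdjoint ((1 : 𝒜) - A j) := fun j => (IsSelfAdjoint.one 𝒜).sub (hA j)
  have hBlow : ∀ j, algebraMap ℝ 𝒜 a ≤ 1 - A j := by
    intro j
    rw [Algebra.algebraMap_eq_smul_one]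
    have : a • (1:𝒜) = 1 - M • 1 := by rw [ha_def, sub_smul, one_smul]
    rw [this]
    exact sub_le_sub_left (hAM j) 1
  have hBhigh : ∀ j, (1:𝒜) - A j ≤ algebraMap ℝ 𝒜 b := by
    intro j
    rw [Algebra.algebraMap_eq_smul_one]
    have : b • (1:𝒜) = 1 - m • 1 := by rw [hb_def, sub_smul, one_smul]
    rw [this]
    exact sub_le_sub_left (hAm j) 1
  have hspec : ∀ j, ∀ x ∈ spectrum ℝ ((1:𝒜) - A j), a ≤ x ∧ x ≤ b := by
    intro j x hx
    exact ⟨(algebraMap_le_iff_le_spectrum (hBsa j)).mp (hBlow j) x hx,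
      (le_algebraMap_iff_spectrum_le (hBsa j)).mp (hBhigh j) x hx⟩
  have hBnonneg : ∀ j, (0:𝒜) ≤ 1 - A j := by
    intro j
    refine le_trans ?_ (hBlow j)
    rw [Algebra.algebraMap_eq_smul_one]
    have h01 : (0:𝒜) ≤ 1 := by simpa using star_mul_self_nonneg (1:𝒜)
    exact smul_nonneg ha0.le h01
  have hPos : ∀ j, (0:ℬ) ≤ Φ j (1 - A j) := fun j => hΦpos j _ (hBnonneg j)
  set X : ℬ := ∑ j, ω j • Φ j (1 - A j) with hX_def
  have hX0 : (0:ℬ) ≤ X := Finset.sum_nonneg fun j _ => smul_nonneg (hω j).le (hPos j)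
  have hXsa : IsSelfAdjoint X := IsSelfAdjoint.of_nonneg hX0
  -- affine cfc computation
  -- upper bound for X
  have step1 : cfc (fun t : ℝ => t ^ p) X ≤ α • X + γ • 1 := by
    have hmon : cfc (fun t : ℝ => t ^ p) X ≤ cfc (fun t : ℝ => α * t + γ) X := by
      apply cfc_mono
      · intro x hx
        have hx0 : 0 ≤ x :=
          spectrum_nonneg_of_nonneg hX0 hx
        rw [hγ_def]
        exact tangent_bound hp0 hp1 hαpos hx0
      · exact hfc.continuousOn
      · exact ((continuous_const.mul continuous_id).add continuous_const).continuousOn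
    rwa [cfc_affine X hXsa α γ] at hmon
  -- lower bound for each term
  have step2 : ∀ j, α • ((1:𝒜) - A j) + β • 1 ≤ cfc (fun t : ℝ => t ^ p) ((1:𝒜) - A j) := by
    intro j
    rw [← cfc_affine ((1:𝒜) - A j) (hBsa j) α β]
    apply cfc_mono
    · intro x hx
      obtain ⟨h1, h2⟩ := hspec j x hx
      rw [hα_def, hβ_def]
      exact chord_bound hp0 hp1 ha0.le hab h1 h2
    · exact ((continuous_const.mul continuous_id).add continuous_const).continuousOn
    · exact hfc.continuousOn
  -- positivity of Φ gives monotonicity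
  have hmono : ∀ j, ∀ x y : 𝒜, x ≤ y → Φ j x ≤ Φ j y := by
    intro j x y hxy
    have := hΦpos j (y - x) (sub_nonneg.mpr hxy)
    rw [map_sub] at this
    exact sub_nonneg.mp this
  have step3 : ∀ j, α • Φ j (1 - A j) + β • (1:ℬ) ≤ Φ j (cfc (fun t : ℝ => t ^ p) (1 - A j)) := by
    intro j
    have := hmono j _ _ (step2 j)
    rwa [map_add, LinearMap.map_smul_of_tower, LinearMap.map_smul_of_tower, hΦ1 j] at this
  -- sum up
  have hsum1 : ∑ j, ω j • (α • Φ j (1 - A j) + β • (1:ℬ)) = α • X + β • 1 := by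
    simp only [smul_add, Finset.sum_add_distrib]
    congr 1
    · rw [hX_def, Finset.smul_sum]
      exact Finset.sum_congr rfl fun j _ => smul_comm _ _ _
    · simp only [smul_smul]
      rw [← Finset.sum_smul]
      rw [show ∑ j, ω j * β = (∑ j, ω j) * β from (Finset.sum_mul ..).symm, hωsum, one_mul]
  have step4 : α • X + β • (1:ℬ) ≤ ∑ j, ω j • Φ j (cfc (fun t : ℝ => t ^ p) (1 - A j)) := by
    rw [← hsum1]
    exact Finset.sum_le_sum fun j _ => smul_le_smul_of_nonneg_left (step3 j) (hω j).le
  -- combine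
  rw [hD]
  calc cfc (fun t : ℝ => t ^ p) X ≤ α • X + γ • 1 := step1
    _ = (γ - β) • 1 + (α • X + β • 1) := by
        rw [sub_smul]; abel
    _ ≤ (γ - β) • 1 + ∑ j, ω j • Φ j (cfc (fun t : ℝ => t ^ p) (1 - A j)) :=
        add_le_add_right step4 _
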